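/- Let k : [0,1]×[0,1] → ℝ be a continuous kernel having rank at least d (in the sense of a rank-d Mercer decomposition with a continuous nonnegative-definite remainder). Then there exist points u_1 < u_2 < … < u_d in [0,1] and a real δ > 0 such that: (1) the closed intervals [u_j − δ, u_j + δ] are pairwise disjoint; and (2) for every choice of points v_1,…,v_d ∈ [0,1] with |v_i − u_i| ≤ δ for each i, the d×d matrix with entries k(v_i,v_j) is invertible. -/

import Mathlib

open MeasureTheory

set_option maxHeartbeats 1000000

-- auxiliary: existence of points where the φ-vectors are linearly independent
lemma aux_indep (d : ℕ) (φ : Fin d → ℝ → ℝ)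
    (hφ : ∀ m, ContinuousOn (φ m) (Set.Icc 0 1))
    (hortho : ∀ i j, (∫ x in (0:ℝ)..1, φ i x * φ j x) = if i = j then 1 else 0) :
    ∃ s : Fin d → ℝ, (∀ i, s i ∈ Set.Icc (0:ℝ) 1) ∧
      LinearIndependent ℝ (fun i m => φ m (s i) : Fin d → Fin d → ℝ) := by
  classical
  set w : ℝ → (Fin d → ℝ) := fun x m => φ m x with hw
  have hspan : Submodule.span ℝ (w '' Set.Icc 0 1) = ⊤ := by
    by_contra hne
    obtain ⟨f, hf0, hfbot⟩ :=
      Submodule.exists_dual_map_eq_bot_of_lt_top (lt_top_iff_ne_top.2 hne)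
        inferInstance
    obtain ⟨c, hcne, hfy⟩ : ∃ c : Fin d → ℝ, c ≠ 0 ∧ ∀ y : Fin d → ℝ, f y = ∑ m, y m * c m := by
      refine ⟨fun m => f (Pi.single m 1), ?_, ?_⟩
      · intro hc0
        apply hf0
        apply LinearMap.ext
        intro y
        have : f y = ∑ m, y m * f (Pi.single m 1) := by
          conv_lhs => rw [← Finset.univ_sum_single y]
          rw [map_sum]
          refine Finset.sum_congr rfl fun m _ => ?_
          have h1 : Pi.single m (y m) = (y m) • (Pi.single m (1:ℝ) : Fin d → ℝ) := by
            funext j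
            by_cases h : j = m
            · subst h; simp
            · simp [Pi.single_eq_of_ne h]
          rw [h1, f.map_smul, smul_eq_mul]
        rw [this]
        have : ∀ m : Fin d, f (Pi.single m 1) = 0 := fun m => congrFun hc0 m
        simp [this]
      · intro y
        conv_lhs => rw [← Finset.univ_sum_single y]
        rw [map_sum]
        refine Finset.sum_congr rfl fun m _ => ?_
        have h1 : Pi.single m (y m) = (y m) • (Pi.single m (1:ℝ) : Fin d → ℝ) := by
          funext j
          by_cases h : j = m
          · subst h; simp
          · simp [Pi.single_eq_of_ne h]
        rw [h1, f.map_smul, smul_eq_mul]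
    clear hf0
    have hker : ∀ x ∈ Set.Icc (0:ℝ) 1, (∑ m, φ m x * c m) = 0 := by
      intro x hx
      have hmem : w x ∈ Submodule.span ℝ (w '' Set.Icc 0 1) :=
        Submodule.subset_span ⟨x, hx, rfl⟩
      have : f (w x) = 0 := by
        have : f (w x) ∈ Submodule.map f (Submodule.span ℝ (w '' Set.Icc 0 1)) :=
          Submodule.mem_map_of_mem hmem
        rw [hfbot] at this
        simpa using this
      rw [hfy] at this
      simpa [hw] using this
    -- integrate
    have hInt : ∀ i j : Fin d, IntervalIntegrable
        (fun x => (φ i x * c i) * (φ j x * c j)) volume 0 1 := by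
      intro i j
      apply ContinuousOn.intervalIntegrable
      rw [Set.uIcc_of_le (by norm_num : (0:ℝ) ≤ 1)]
      exact (((hφ i).mul continuousOn_const).mul ((hφ j).mul continuousOn_const))
    have hInt2 : ∀ i : Fin d, IntervalIntegrable
        (fun x => ∑ j, (φ i x * c i) * (φ j x * c j)) volume 0 1 := by
      intro i
      apply ContinuousOn.intervalIntegrable
      rw [Set.uIcc_of_le (by norm_num : (0:ℝ) ≤ 1)]
      exact continuousOn_finset_sum _ fun j _ =>
        (((hφ i).mul continuousOn_const).mul ((hφ j).mul continuousOn_const))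
    have key : (∫ x in (0:ℝ)..1, (∑ m, φ m x * c m) * (∑ m, φ m x * c m)) = ∑ i, c i ^ 2 := by
      have expand : ∀ x : ℝ, (∑ m, φ m x * c m) * (∑ m, φ m x * c m)
          = ∑ i, ∑ j, (φ i x * c i) * (φ j x * c j) := by
        intro x; rw [Finset.sum_mul_sum]
      rw [intervalIntegral.integral_congr (g := fun x => ∑ i, ∑ j, (φ i x * c i) * (φ j x * c j))
        (fun x _ => expand x)]
      rw [intervalIntegral.integral_finset_sum (f := fun i x => ∑ j, φ i x * c i * (φ j x * c j))
        (fun i _ => hInt2 i)]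
      have : ∀ i : Fin d, (∫ x in (0:ℝ)..1, ∑ j, (φ i x * c i) * (φ j x * c j))
          = ∑ j, (c i * c j) * ∫ x in (0:ℝ)..1, φ i x * φ j x := by
        intro i
        rw [intervalIntegral.integral_finset_sum (f := fun j x => φ i x * c i * (φ j x * c j)) (fun j _ => hInt i j)]
        refine Finset.sum_congr rfl fun j _ => ?_
        rw [← intervalIntegral.integral_const_mul]
        congr 1; ext x; ring
      simp only [this, hortho]
      simp [Finset.sum_ite_eq, sq]
    have hzero : (∫ x in (0:ℝ)..1, (∑ m, φ m x * c m) * (∑ m, φ m x * c m)) = 0 := by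
      rw [intervalIntegral.integral_congr (g := fun _ => (0:ℝ))]
      · simp
      · intro x hx
        rw [Set.uIcc_of_le (by norm_num : (0:ℝ) ≤ 1)] at hx
        simp [hker x hx]
    rw [hzero] at key
    apply hcne
    funext i
    have := (Finset.sum_eq_zero_iff_of_nonneg (fun i _ => sq_nonneg (c i))).1 key.symm i (Finset.mem_univ i)
    exact pow_eq_zero_iff (by norm_num) |>.1 this
  -- extract d independent vectors from the image
  obtain ⟨t, hts, htspan, htli⟩ := exists_linearIndependent ℝ (w '' Set.Icc 0 1)
  rw [hspan] at htspan
  have htfin : t.Finite := htli.setFinite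
  have : Fintype t := htfin.fintype
  have hcard : Fintype.card t = d := by
    have h1 : Module.finrank ℝ (Fin d → ℝ) = d := by simp
    have h2 := finrank_span_set_eq_card htli
    rw [htspan] at h2
    rw [Set.toFinset_card] at h2
    rw [finrank_top] at h2
    omega
  -- bijection
  let e : Fin d ≃ t := (Fintype.equivFinOfCardEq hcard).symm
  have hpre : ∀ i : Fin d, ∃ x ∈ Set.Icc (0:ℝ) 1, w x = (e i : Fin d → ℝ) := by
    intro i
    have : (e i : Fin d → ℝ) ∈ w '' Set.Icc 0 1 := hts (e i).2
    obtain ⟨x, hx, hwx⟩ := this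
    exact ⟨x, hx, hwx⟩
  choose s hs hws using hpre
  refine ⟨s, hs, ?_⟩
  have : (fun i m => φ m (s i) : Fin d → Fin d → ℝ) = fun i => ((e i : Fin d → ℝ)) := by
    funext i; exact hws i
  rw [this]
  exact htli.comp e e.injective

/-- For a continuous kernel on `[0,1]²` of rank at least `d`, there are points
`u₁ < … < u_d` in `[0,1]` and a radius `δ > 0` such that the closed balls `[uⱼ-δ, uⱼ+δ]` are
pairwise disjoint and the evaluation matrix `(k(vᵢ,vⱼ))` is invertible for any points
`vᵢ ∈ [0,1]` with `|vᵢ - uᵢ| ≤ δ`. -/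
theorem exists_points_and_radius_eval_matrix_det_ne_zero
    (d : ℕ) (k B : ℝ → ℝ → ℝ) (lam : Fin d → ℝ) (φ : Fin d → ℝ → ℝ)
    (hk : ContinuousOn (fun p : ℝ × ℝ => k p.1 p.2) (Set.Icc 0 1 ×ˢ Set.Icc 0 1))
    (hlam : ∀ m, 0 < lam m)
    (hφ : ∀ m, ContinuousOn (φ m) (Set.Icc 0 1))
    (hortho : ∀ i j, (∫ x in (0:ℝ)..1, φ i x * φ j x) = if i = j then 1 else 0)
    (hB : ContinuousOn (fun p : ℝ × ℝ => B p.1 p.2) (Set.Icc 0 1 ×ˢ Set.Icc 0 1))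
    (hBpsd : ∀ (n : ℕ) (s : Fin n → ℝ), (∀ i, s i ∈ Set.Icc (0:ℝ) 1) →
      (Matrix.of fun i j => B (s i) (s j)).PosSemidef)
    (hdecomp : ∀ s ∈ Set.Icc (0:ℝ) 1, ∀ t ∈ Set.Icc (0:ℝ) 1,
      k s t = (∑ m, lam m * φ m s * φ m t) + B s t) :
    ∃ u : Fin d → ℝ, ∃ δ : ℝ, 0 < δ ∧ (∀ i, u i ∈ Set.Icc (0:ℝ) 1) ∧ StrictMono u ∧
      (∀ i j : Fin d, i ≠ j →
        Disjoint (Set.Icc (u i - δ) (u i + δ)) (Set.Icc (u j - δ) (u j + δ))) ∧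
      ∀ v : Fin d → ℝ, (∀ i, v i ∈ Set.Icc (0:ℝ) 1) → (∀ i, |v i - u i| ≤ δ) →
        (Matrix.of fun i j => k (v i) (v j)).det ≠ 0 := by
  classical
  obtain ⟨s, hs, hli⟩ := aux_indep d φ hφ hortho
  have hsinj : Function.Injective s := by
    intro i j hij
    exact hli.injective (by rw [hij])
  set σ := Tuple.sort s with hσ
  set u : Fin d → ℝ := fun i => s (σ i) with hu_def
  have hu : ∀ i, u i ∈ Set.Icc (0:ℝ) 1 := fun i => hs (σ i)
  have huinj : Function.Injective u := hsinj.comp σ.injective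
  have humono : StrictMono u := (Tuple.monotone_sort s).strictMono_of_injective huinj
  have hliu : LinearIndependent ℝ (fun i m => φ m (u i) : Fin d → Fin d → ℝ) :=
    hli.comp σ σ.injective
  -- determinant at u is nonzero
  have hdetu : (Matrix.of fun i j => k (u i) (u j)).det ≠ 0 := by
    intro hdet
    obtain ⟨x, hx0, hxv⟩ := (Matrix.exists_mulVec_eq_zero_iff).2 hdet
    set y : Fin d → ℝ := fun m => ∑ i, x i * φ m (u i) with hy
    have hyne : y ≠ 0 := by
      intro hy0
      apply hx0
      funext i
      refine Fintype.linearIndependent_iff.1 hliu x ?_ i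
      funext m
      have : (∑ i, x i • (fun m => φ m (u i) : Fin d → ℝ)) m = ∑ i, x i * φ m (u i) := by
        simp [Finset.sum_apply]
      rw [show (0 : Fin d → ℝ) m = (0:ℝ) from rfl] at *
      calc (∑ i, x i • (fun m => φ m (u i) : Fin d → ℝ)) m
          = y m := by rw [this, hy]
        _ = 0 := by rw [hy0]; rfl
    obtain ⟨m₀, hm₀⟩ := Function.ne_iff.1 hyne
    simp only [Pi.zero_apply] at hm₀
    have hBq := (hBpsd d u hu).dotProduct_mulVec_nonneg x
    rw [star_trivial] at hBq
    have expand : dotProduct x (Matrix.mulVec (Matrix.of fun i j => k (u i) (u j)) x)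
        = (∑ m, lam m * (y m * y m))
          + dotProduct x (Matrix.mulVec (Matrix.of fun i j => B (u i) (u j)) x) := by
      simp only [dotProduct, Matrix.mulVec, Matrix.of_apply]
      have e2 : ∀ i j : Fin d, x i * (k (u i) (u j) * x j)
          = (∑ m, lam m * ((x i * φ m (u i)) * (x j * φ m (u j))))
            + x i * (B (u i) (u j) * x j) := by
        intro i j
        rw [hdecomp _ (hu i) _ (hu j), add_mul, mul_add]
        congr 1
        rw [Finset.sum_mul, Finset.mul_sum]
        exact Finset.sum_congr rfl fun m _ => by ring
      calc ∑ i, x i * ∑ j, k (u i) (u j) * x j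
          = ∑ i, ∑ j, ((∑ m, lam m * ((x i * φ m (u i)) * (x j * φ m (u j))))
              + x i * (B (u i) (u j) * x j)) := by
            refine Finset.sum_congr rfl fun i _ => ?_
            rw [Finset.mul_sum]
            exact Finset.sum_congr rfl fun j _ => e2 i j
        _ = (∑ i, ∑ j, ∑ m, lam m * ((x i * φ m (u i)) * (x j * φ m (u j))))
              + ∑ i, ∑ j, x i * (B (u i) (u j) * x j) := by
            rw [← Finset.sum_add_distrib]
            exact Finset.sum_congr rfl fun i _ => by rw [← Finset.sum_add_distrib]
        _ = (∑ m, lam m * (y m * y m)) + ∑ i, x i * ∑ j, B (u i) (u j) * x j := by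
            congr 1
            · have hA : (∑ m, lam m * (y m * y m))
                  = ∑ i, ∑ j, ∑ m, lam m * ((x i * φ m (u i)) * (x j * φ m (u j))) := by
                calc (∑ m, lam m * (y m * y m))
                    = ∑ m, ∑ i, ∑ j, lam m * ((x i * φ m (u i)) * (x j * φ m (u j))) := by
                      refine Finset.sum_congr rfl fun m _ => ?_
                      rw [hy]
                      rw [Finset.sum_mul_sum, Finset.mul_sum]
                      refine Finset.sum_congr rfl fun i _ => ?_
                      rw [Finset.mul_sum]
                  _ = ∑ i, ∑ m, ∑ j, lam m * ((x i * φ m (u i)) * (x j * φ m (u j))) :=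
                      Finset.sum_comm
                  _ = ∑ i, ∑ j, ∑ m, lam m * ((x i * φ m (u i)) * (x j * φ m (u j))) :=
                      Finset.sum_congr rfl fun i _ => Finset.sum_comm
              exact hA.symm
            · exact Finset.sum_congr rfl fun i _ => by rw [Finset.mul_sum]
    have hzero : dotProduct x (Matrix.mulVec (Matrix.of fun i j => k (u i) (u j)) x) = 0 := by
      rw [hxv, dotProduct_zero]
    have hApos : 0 < ∑ m, lam m * (y m * y m) := by
      refine Finset.sum_pos' (fun m _ => mul_nonneg (hlam m).le (mul_self_nonneg _)) ?_
      exact ⟨m₀, Finset.mem_univ _, mul_pos (hlam m₀) (mul_self_pos.2 hm₀)⟩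
    rw [expand] at hzero
    linarith
  -- continuity of the determinant map
  set S : Set (Fin d → ℝ) := Set.pi Set.univ (fun _ => Set.Icc (0:ℝ) 1) with hS
  have hF : ContinuousOn (fun v : Fin d → ℝ => (Matrix.of fun i j => k (v i) (v j)).det) S := by
    have hmat : ContinuousOn (fun v : Fin d → ℝ => (Matrix.of fun i j => k (v i) (v j))) S := by
      refine continuousOn_pi.2 ?_
      intro i
      rw [continuousOn_pi]
      intro j
      have : ContinuousOn ((fun p : ℝ × ℝ => k p.1 p.2) ∘ (fun v : Fin d → ℝ => (v i, v j))) S :=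
        hk.comp (((continuous_apply i).prodMk (continuous_apply j)).continuousOn)
          (fun v (hv : v ∈ S) => ⟨hv i trivial, hv j trivial⟩)
      exact this
    exact (continuous_id.matrix_det).comp_continuousOn hmat
  have huS : u ∈ S := fun i _ => hu i
  have hcw : ContinuousWithinAt
      (fun v : Fin d → ℝ => (Matrix.of fun i j => k (v i) (v j)).det) S u :=
    hF.continuousWithinAt huS
  have hnhds : (fun v : Fin d → ℝ => (Matrix.of fun i j => k (v i) (v j)).det) ⁻¹' {(0:ℝ)}ᶜ
      ∈ nhdsWithin u S := hcw (isOpen_compl_singleton.mem_nhds hdetu)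
  rw [Metric.mem_nhdsWithin_iff] at hnhds
  obtain ⟨ε, hε0, hεsub⟩ := hnhds
  -- gap
  obtain ⟨γ, hγ0, hγ⟩ : ∃ γ : ℝ, 0 < γ ∧ ∀ i j : Fin d, i ≠ j → 2 * γ < |u i - u j| := by
    by_cases hd : (Finset.univ.filter fun p : Fin d × Fin d => p.1 ≠ p.2).Nonempty
    · obtain ⟨p₀, hp₀, hmin⟩ := Finset.exists_min_image
        (Finset.univ.filter fun p : Fin d × Fin d => p.1 ≠ p.2)
        (fun p => |u p.1 - u p.2|) hd
      have hp₀ne : p₀.1 ≠ p₀.2 := (Finset.mem_filter.1 hp₀).2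
      have hpos : 0 < |u p₀.1 - u p₀.2| :=
        abs_pos.2 (sub_ne_zero.2 fun h => hp₀ne (huinj h))
      refine ⟨|u p₀.1 - u p₀.2| / 3, by linarith, fun i j hij => ?_⟩
      have := hmin (i, j) (Finset.mem_filter.2 ⟨Finset.mem_univ _, hij⟩)
      simp only at this
      linarith
    · refine ⟨1, one_pos, fun i j hij => absurd ?_ hij⟩
      by_contra h
      exact hd ⟨(i, j), Finset.mem_filter.2 ⟨Finset.mem_univ _, h⟩⟩
  set δ : ℝ := min (ε / 2) γ with hδ
  have hδ0 : 0 < δ := lt_min (by linarith) hγ0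
  refine ⟨u, δ, hδ0, hu, humono, ?_, ?_⟩
  · intro i j hij
    rw [Set.disjoint_left]
    intro a hai haj
    rw [Set.mem_Icc] at hai haj
    have h1 : |u i - a| ≤ δ := abs_le.2 ⟨by linarith [hai.1, hai.2], by linarith [hai.1, hai.2]⟩
    have h2 : |a - u j| ≤ δ := abs_le.2 ⟨by linarith [haj.1, haj.2], by linarith [haj.1, haj.2]⟩
    have h3 := abs_sub_le (u i) a (u j)
    have h4 := hγ i j hij
    have h5 : δ ≤ γ := min_le_right _ _
    linarith
  · intro v hv hvu
    have hvS : v ∈ S := fun i _ => hv i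
    have hdist : dist v u ≤ δ := by
      rw [dist_pi_le_iff hδ0.le]
      intro i
      rw [Real.dist_eq]
      exact hvu i
    have hball : v ∈ Metric.ball u ε := by
      rw [Metric.mem_ball]
      have : δ ≤ ε / 2 := min_le_left _ _
      calc dist v u ≤ δ := hdist
        _ < ε := by linarith
    have := hεsub ⟨hball, hvS⟩
    simpa using this
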